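/- For any type p with denominator n over an alphabet of size d, the size of the type class T_p^n satisfies (n+1)^{−d} · 2^{nH(p)} ≤ |T_p^n| ≤ 2^{nH(p)}. -/

import Mathlib

open Finset Nat

private lemma factL (c : ℕ) : ∀ k, c ≤ k → c ! * c ^ (k - c) ≤ k ! := by
  intro k hk
  induction k, hk using Nat.le_induction with
  | base => simp
  | succ m hm ih =>
    have h1 : m + 1 - c = (m - c) + 1 := by omega
    rw [h1, pow_succ, ← mul_assoc, Nat.factorial_succ]
    calc c ! * c ^ (m - c) * c ≤ m ! * c := Nat.mul_le_mul_right _ ih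
    _ ≤ (m + 1) * m ! := by rw [mul_comm]; exact Nat.mul_le_mul_right _ (by omega)

private lemma factL2 (a : ℕ) : ∀ b, a ≤ b → b ! ≤ a ! * b ^ (b - a) := by
  intro b hb
  induction b, hb using Nat.le_induction with
  | base => simp
  | succ m hm ih =>
    have h1 : m + 1 - a = (m - a) + 1 := by omega
    rw [h1, Nat.factorial_succ]
    calc (m + 1) * m ! ≤ (m + 1) * (a ! * m ^ (m - a)) := Nat.mul_le_mul_left _ ih
    _ ≤ a ! * ((m + 1) ^ (m - a) * (m + 1)) := by
        have h2 : m ^ (m - a) ≤ (m + 1) ^ (m - a) := Nat.pow_le_pow_left (by omega) _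
        calc (m + 1) * (a ! * m ^ (m - a)) = a ! * (m ^ (m - a) * (m + 1)) := by ring
        _ ≤ a ! * ((m + 1) ^ (m - a) * (m + 1)) :=
            Nat.mul_le_mul_left _ (Nat.mul_le_mul_right _ h2)
    _ = a ! * (m + 1) ^ (m - a + 1) := by rw [pow_succ]

private lemma fact_key (c k : ℕ) : c ! * c ^ k ≤ k ! * c ^ c := by
  rcases le_or_gt k c with h | h
  · have h2 : c ! ≤ k ! * c ^ (c - k) := factL2 k c h
    calc c ! * c ^ k ≤ k ! * c ^ (c - k) * c ^ k := Nat.mul_le_mul_right _ h2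
    _ = k ! * c ^ c := by rw [mul_assoc, ← pow_add]; congr 2; omega
  · have h2 : c ! * c ^ (k - c) ≤ k ! := factL c k h.le
    calc c ! * c ^ k = c ! * c ^ (k - c) * c ^ c := by rw [mul_assoc, ← pow_add]; congr 2; omega
    _ ≤ k ! * c ^ c := Nat.mul_le_mul_right _ h2

private lemma exists_perm {n : ℕ} {A : Type*} [Fintype A] [DecidableEq A] (x y : Fin n → A)
    (h : ∀ a, (univ.filter (fun i => x i = a)).card = (univ.filter (fun i => y i = a)).card) :
    ∃ σ : Equiv.Perm (Fin n), x = y ∘ σ := by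
  have hcard : ∀ a : A, Fintype.card {i // x i = a} = Fintype.card {i // y i = a} := by
    intro a
    rw [Fintype.card_subtype, Fintype.card_subtype, h a]
  let e : (Σ a : A, {i // x i = a}) ≃ (Σ a : A, {i // y i = a}) :=
    Equiv.sigmaCongrRight (fun a => Fintype.equivOfCardEq (hcard a))
  let σ := ((Equiv.sigmaFiberEquiv x).symm.trans e).trans (Equiv.sigmaFiberEquiv y)
  refine ⟨σ, funext fun i => ?_⟩
  show x i = y (σ i)
  have h1 : σ i = (Equiv.sigmaFiberEquiv y) (e ((Equiv.sigmaFiberEquiv x).symm i)) := rfl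
  have h2 : ∀ s : Σ a : A, {i // x i = a}, y ((Equiv.sigmaFiberEquiv y) (e s)) = s.1 := by
    intro s
    have h3 : (e s).1 = s.1 := rfl
    have h4 : y ((e s).2 : Fin n) = (e s).1 := (e s).2.2
    simpa [Equiv.sigmaFiberEquiv, h3] using h4
  have h5 : ((Equiv.sigmaFiberEquiv x).symm i).1 = x i := rfl
  rw [h1, h2, h5]

private lemma card_typeclass {n : ℕ} {A : Type*} [Fintype A] [DecidableEq A] (x₀ : Fin n → A) :
    (univ.filter (fun x : Fin n → A => ∀ a,
        (univ.filter (fun i => x i = a)).card = (univ.filter (fun i => x₀ i = a)).card)).card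
      * ∏ a, ((univ.filter (fun i => x₀ i = a)).card)! = n ! := by
  classical
  set k : A → ℕ := fun a => (univ.filter (fun i => x₀ i = a)).card with hk
  set S := univ.filter (fun x : Fin n → A => ∀ a,
    (univ.filter (fun i => x i = a)).card = k a) with hS
  have hmaps : ∀ σ : Equiv.Perm (Fin n), x₀ ∘ σ ∈ S := by
    intro σ
    simp only [hS, mem_filter, mem_univ, true_and]
    intro a
    apply Finset.card_bij' (fun i _ => σ i) (fun j _ => σ.symm j)
    · intro i hi; simp only [mem_filter, mem_univ, true_and] at hi ⊢; exact hi
    · intro j hj; simp only [mem_filter, mem_univ, true_and] at hj ⊢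
      simpa using hj
    · intro i _; simp
    · intro j _; simp
  have hsplit : (univ : Finset (Equiv.Perm (Fin n))).card
      = ∑ x ∈ S, (univ.filter (fun σ : Equiv.Perm (Fin n) => x₀ ∘ σ = x)).card :=
    Finset.card_eq_sum_card_fiberwise (fun σ _ => hmaps σ)
  have hfiber : ∀ x ∈ S, (univ.filter (fun σ : Equiv.Perm (Fin n) => x₀ ∘ σ = x)).card
      = ∏ a, (k a)! := by
    intro x hx
    obtain ⟨τ, hτ⟩ := exists_perm x x₀ (by
      simpa [hS, mem_filter] using (mem_filter.mp hx).2)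
    have hcongr : (univ.filter (fun σ : Equiv.Perm (Fin n) => x₀ ∘ σ = x)).card
        = Fintype.card {g : Equiv.Perm (Fin n) // x₀ ∘ g = x₀} := by
      rw [← Fintype.card_subtype]
      apply Fintype.card_congr
      refine Equiv.subtypeEquiv (Equiv.mulRight τ⁻¹) ?_
      intro σ
      simp only [Equiv.coe_mulRight]
      constructor
      · intro hs
        funext i
        have h1 := congrFun hs (τ⁻¹ i)
        have h2 := congrFun hτ (τ⁻¹ i)
        simp only [Function.comp_apply] at h1 h2 ⊢
        simp only [Equiv.Perm.coe_mul, Function.comp_apply]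
        rw [h1, h2]
        simp
      · intro hs
        funext i
        have h1 := congrFun hs (τ i)
        have h2 := congrFun hτ i
        simp only [Equiv.Perm.coe_mul, Function.comp_apply, Equiv.Perm.inv_def, Equiv.symm_apply_apply] at h1
        simp only [Function.comp_apply] at h2 ⊢
        rw [h2, ← h1]
    rw [hcongr, DomMulAct.stabilizer_card]
    exact Finset.prod_congr rfl fun a _ => by rw [Fintype.card_subtype]
  rw [Finset.sum_congr rfl hfiber, Finset.sum_const, smul_eq_mul] at hsplit
  rw [← hsplit, Finset.card_univ, Fintype.card_perm, Fintype.card_fin]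

private lemma exists_rep {A : Type*} [Fintype A] [DecidableEq A] (n : ℕ) (c : A → ℕ)
    (hc : ∑ a, c a = n) :
    ∃ x₀ : Fin n → A, ∀ a, (univ.filter (fun i => x₀ i = a)).card = c a := by
  classical
  have hcard : Fintype.card (Fin n) = Fintype.card (Σ a : A, Fin (c a)) := by
    simp [hc]
  let e : Fin n ≃ Σ a : A, Fin (c a) := Fintype.equivOfCardEq hcard
  refine ⟨fun i => (e i).1, fun a => ?_⟩
  rw [← Fintype.card_subtype]
  have e2 : {i : Fin n // (e i).1 = a} ≃ {s : Σ a' : A, Fin (c a') // s.1 = a} :=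
    e.subtypeEquiv fun i => Iff.rfl
  have e3 : {s : Σ a' : A, Fin (c a') // s.1 = a} ≃ Fin (c a) :=
    { toFun := fun s => Fin.cast (congrArg c s.2) s.1.2
      invFun := fun j => ⟨⟨a, j⟩, rfl⟩
      left_inv := by rintro ⟨⟨a', j⟩, rfl⟩; rfl
      right_inv := fun j => rfl }
  rw [Fintype.card_congr (e2.trans e3), Fintype.card_fin]

private lemma rpow_fin_sum {ι : Type*} (s : Finset ι) (f : ι → ℝ) :
    (2:ℝ) ^ (∑ i ∈ s, f i) = ∏ i ∈ s, (2:ℝ) ^ f i := by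
  induction s using Finset.cons_induction with
  | empty => simp
  | cons a s ha ih =>
    rw [Finset.sum_cons, Finset.prod_cons, Real.rpow_add (by norm_num), ih]

theorem stmt3 {A : Type*} [Fintype A] [DecidableEq A] (n : ℕ) (hn : 0 < n)
    (c : A → ℕ) (hc : ∑ a, c a = n) :
    let d := Fintype.card A
    let H : ℝ := -∑ a, ((c a : ℝ) / n) * Real.logb 2 ((c a : ℝ) / n)
    let T := Finset.univ.filter
      (fun x : Fin n → A => ∀ a, (Finset.univ.filter (fun i => x i = a)).card = c a)
    (1 / ((n : ℝ) + 1) ^ d) * (2 : ℝ) ^ ((n : ℝ) * H) ≤ (T.card : ℝ) ∧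
      (T.card : ℝ) ≤ (2 : ℝ) ^ ((n : ℝ) * H) := by
  intro d H T
  classical
  have hddef : d = Fintype.card A := rfl
  have hn' : (0:ℝ) < n := by exact_mod_cast hn
  set p : A → ℝ := fun a => (c a : ℝ) / n with hp
  have hHdef : H = -∑ a, p a * Real.logb 2 (p a) := rfl
  have hp0 : ∀ a, 0 ≤ p a := fun a => div_nonneg (Nat.cast_nonneg _) hn'.le
  have hppos : ∀ a, 0 < c a → 0 < p a := fun a h =>
    div_pos (by exact_mod_cast h) hn'
  have hpsum : ∑ a, p a = 1 := by
    rw [hp, ← Finset.sum_div,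
      show (∑ a, ((c a : ℕ) : ℝ)) = (n : ℝ) by exact_mod_cast hc]
    exact div_self hn'.ne'
  set t : (Fin n → A) → (A → ℕ) := fun x a => (univ.filter (fun i => x i = a)).card with ht
  set P : (A → ℕ) → ℝ := fun k => ∏ a, p a ^ k a with hPdef
  have hprod : ∀ x : Fin n → A, ∏ i, p (x i) = P (t x) := by
    intro x
    rw [hPdef]
    rw [← Finset.prod_fiberwise_of_maps_to (g := x) (fun i _ => mem_univ (x i))
      (fun i => p (x i))]
    refine Finset.prod_congr rfl fun a _ => ?_
    rw [Finset.prod_congr rfl (fun i hi => ?_), Finset.prod_const]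
    · simp only [mem_filter] at hi; rw [hi.2]
  have htotal : ∑ x : Fin n → A, ∏ i, p (x i) = 1 := by
    rw [← Fintype.sum_pow, hpsum, one_pow]
  have hPc_pos : 0 < P c := by
    rw [hPdef]
    refine Finset.prod_pos fun a _ => ?_
    rcases Nat.eq_zero_or_pos (c a) with h | h
    · simp [h]
    · exact pow_pos (hppos a h) _
  have hH : (2:ℝ) ^ ((n:ℝ) * H) = (P c)⁻¹ := by
    have h1 : (n:ℝ) * H = -∑ a, (c a : ℝ) * Real.logb 2 (p a) := by
      rw [hHdef, mul_neg, Finset.mul_sum, neg_inj]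
      refine Finset.sum_congr rfl fun a _ => ?_
      rw [← mul_assoc]
      congr 1
      rw [hp]
      field_simp
    have h2 : ∀ a, p a ^ (c a) = (2:ℝ) ^ ((c a : ℝ) * Real.logb 2 (p a)) := by
      intro a
      rcases Nat.eq_zero_or_pos (c a) with h | h
      · simp [h]
      · have hpa := hppos a h
        rw [mul_comm, Real.rpow_mul (by norm_num : (0:ℝ) ≤ 2),
          Real.rpow_logb (by norm_num) (by norm_num) hpa, Real.rpow_natCast]
    have h3 : P c = (2:ℝ) ^ (∑ a, (c a : ℝ) * Real.logb 2 (p a)) := by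
      rw [hPdef, rpow_fin_sum]
      exact Finset.prod_congr rfl fun a _ => h2 a
    rw [h1, h3, Real.rpow_neg (by norm_num)]
  obtain ⟨x₀, hx₀⟩ := exists_rep n c hc
  have htx₀ : t x₀ = c := funext hx₀
  have hcount : ∀ x₁ : Fin n → A,
      (univ.filter (fun x => t x = t x₁)).card * ∏ a, (t x₁ a)! = n ! := by
    intro x₁
    rw [show (univ.filter (fun x => t x = t x₁)) = univ.filter (fun x : Fin n → A => ∀ a,
        (univ.filter (fun i => x i = a)).card = (univ.filter (fun i => x₁ i = a)).card) from
      Finset.filter_congr fun x _ => by simp [ht, funext_iff]]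
    exact card_typeclass x₁
  have hT : T = univ.filter (fun x => t x = c) := by
    refine Finset.filter_congr fun x _ => ?_
    simp [ht, funext_iff]
  have hTfact : T.card * ∏ a, (c a)! = n ! := by
    rw [hT, ← htx₀]
    exact hcount x₀
  have hTle : (T.card : ℝ) * P c ≤ 1 := by
    have h1 : ∀ x ∈ T, ∏ i, p (x i) = P c := by
      intro x hx
      rw [hprod x]
      have hx' : t x = c := by rw [hT] at hx; exact (Finset.mem_filter.mp hx).2
      rw [hx']
    calc (T.card : ℝ) * P c = ∑ x ∈ T, ∏ i, p (x i) := by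
          rw [Finset.sum_congr rfl h1, Finset.sum_const, nsmul_eq_mul]
    _ ≤ ∑ x : Fin n → A, ∏ i, p (x i) :=
          Finset.sum_le_sum_of_subset_of_nonneg (Finset.subset_univ _)
            (fun x _ _ => Finset.prod_nonneg fun i _ => hp0 _)
    _ = 1 := htotal
  have hupper : (T.card : ℝ) ≤ (2:ℝ) ^ ((n:ℝ) * H) := by
    rw [hH, inv_eq_one_div]
    exact (le_div_iff₀ hPc_pos).mpr hTle
  -- lower bound
  have hterm : ∀ k ∈ Finset.image t univ,
      ((univ.filter (fun x => t x = k)).card : ℝ) * P k ≤ (T.card : ℝ) * P c := by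
    intro k hk
    obtain ⟨x₁, _, hx₁⟩ := Finset.mem_image.mp hk
    have hksum : ∑ a, k a = n := by
      rw [← hx₁]
      have h0 := Finset.card_eq_sum_card_fiberwise (f := x₁) (s := univ) (t := univ)
        (fun i _ => mem_univ (x₁ i))
      simpa [ht] using h0.symm
    have hkfact : (univ.filter (fun x => t x = k)).card * ∏ a, (k a)! = n ! := by
      rw [← hx₁]
      exact hcount x₁
    have hB : (0:ℝ) < ∏ a, ((k a)! : ℝ) :=
      Finset.prod_pos fun a _ => by positivity
    have hC : (0:ℝ) < ∏ a, ((c a)! : ℝ) :=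
      Finset.prod_pos fun a _ => by positivity
    have hNk : ((univ.filter (fun x => t x = k)).card : ℝ) * ∏ a, ((k a)! : ℝ)
        = ((n ! : ℕ) : ℝ) := by exact_mod_cast congrArg (Nat.cast : ℕ → ℝ) hkfact
    have hNc : (T.card : ℝ) * ∏ a, ((c a)! : ℝ) = ((n ! : ℕ) : ℝ) := by
      exact_mod_cast congrArg (Nat.cast : ℕ → ℝ) hTfact
    have hkey : (∏ a, ((c a)! : ℝ)) * P k ≤ (∏ a, ((k a)! : ℝ)) * P c := by
      have hcancel : (0:ℝ) < (n:ℝ) ^ n := pow_pos hn' n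
      rw [← mul_le_mul_iff_of_pos_right hcancel]
      have e1 : (∏ a, ((c a)! : ℝ)) * P k * (n:ℝ) ^ n
          = ∏ a, (((c a)! : ℝ) * (c a : ℝ) ^ (k a)) := by
        rw [show ((n:ℝ) ^ n) = ∏ a, (n:ℝ) ^ (k a) by
          rw [Finset.prod_pow_eq_pow_sum, hksum]]
        rw [hPdef, ← Finset.prod_mul_distrib, ← Finset.prod_mul_distrib]
        refine Finset.prod_congr rfl fun a _ => ?_
        rw [mul_assoc, ← mul_pow, hp]
        congr 2
        field_simp
      have e2 : (∏ a, ((k a)! : ℝ)) * P c * (n:ℝ) ^ n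
          = ∏ a, (((k a)! : ℝ) * (c a : ℝ) ^ (c a)) := by
        rw [show ((n:ℝ) ^ n) = ∏ a, (n:ℝ) ^ (c a) by
          rw [Finset.prod_pow_eq_pow_sum, hc]]
        rw [hPdef, ← Finset.prod_mul_distrib, ← Finset.prod_mul_distrib]
        refine Finset.prod_congr rfl fun a _ => ?_
        rw [mul_assoc, ← mul_pow, hp]
        congr 2
        field_simp
      rw [e1, e2]
      refine Finset.prod_le_prod (fun a _ => by positivity) (fun a _ => ?_)
      exact_mod_cast fact_key (c a) (k a)
    have hPk0 : 0 ≤ P k := Finset.prod_nonneg fun a _ => pow_nonneg (hp0 a) _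
    rw [← mul_le_mul_iff_of_pos_right (mul_pos hB hC)]
    calc ((univ.filter (fun x => t x = k)).card : ℝ) * P k
          * ((∏ a, ((k a)! : ℝ)) * (∏ a, ((c a)! : ℝ)))
        = (((univ.filter (fun x => t x = k)).card : ℝ) * ∏ a, ((k a)! : ℝ))
          * ((∏ a, ((c a)! : ℝ)) * P k) := by ring
    _ = ((n ! : ℕ) : ℝ) * ((∏ a, ((c a)! : ℝ)) * P k) := by rw [hNk]
    _ ≤ ((n ! : ℕ) : ℝ) * ((∏ a, ((k a)! : ℝ)) * P c) := by
        exact mul_le_mul_of_nonneg_left hkey (by positivity)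
    _ = ((T.card : ℝ) * ∏ a, ((c a)! : ℝ)) * ((∏ a, ((k a)! : ℝ)) * P c) := by rw [hNc]
    _ = (T.card : ℝ) * P c * ((∏ a, ((k a)! : ℝ)) * (∏ a, ((c a)! : ℝ))) := by ring
  have hcover : (1:ℝ) = ∑ k ∈ Finset.image t univ,
      ((univ.filter (fun x => t x = k)).card : ℝ) * P k := by
    have h0 : ∑ k ∈ Finset.image t univ,
          ∑ x ∈ univ.filter (fun x : Fin n → A => t x = k), ∏ i, p (x i)
        = ∑ x ∈ (univ : Finset (Fin n → A)), ∏ i, p (x i) :=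
      Finset.sum_fiberwise_of_maps_to (fun x _ => Finset.mem_image_of_mem t (mem_univ x)) _
    calc (1:ℝ) = ∑ x ∈ (univ : Finset (Fin n → A)), ∏ i, p (x i) := htotal.symm
    _ = ∑ k ∈ Finset.image t univ,
        ∑ x ∈ univ.filter (fun x : Fin n → A => t x = k), ∏ i, p (x i) := h0.symm
    _ = ∑ k ∈ Finset.image t univ,
        ((univ.filter (fun x => t x = k)).card : ℝ) * P k := by
      refine Finset.sum_congr rfl fun k hk => ?_
      rw [Finset.sum_congr rfl (fun x hx => ?_), Finset.sum_const, nsmul_eq_mul]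
      rw [hprod x, (Finset.mem_filter.mp hx).2]
  have himg : ((Finset.image t univ).card : ℝ) ≤ ((n:ℝ) + 1) ^ d := by
    have hbd : ∀ k ∈ Finset.image t univ, ∀ a, k a ≤ n := by
      intro k hk a
      obtain ⟨x₁, _, hx₁⟩ := Finset.mem_image.mp hk
      rw [← hx₁]
      calc t x₁ a ≤ (univ : Finset (Fin n)).card := Finset.card_filter_le _ _
      _ = n := by simp
    have h1 : (Finset.image t univ).card ≤ (n+1) ^ d := by
      calc (Finset.image t univ).card ≤ (univ : Finset (A → Fin (n+1))).card := by
            apply Finset.card_le_card_of_injOn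
              (fun k a => (⟨min (k a) n, by omega⟩ : Fin (n+1)))
              (fun _ _ => mem_univ _)
            intro k hk k' hk' he
            funext a
            have h2 : min (k a) n = min (k' a) n := by
              have := congrFun he a
              simpa [Fin.mk.injEq] using this
            have h3 := hbd k hk a
            have h4 := hbd k' hk' a
            omega
      _ = (n+1) ^ d := by
            rw [Finset.card_univ, Fintype.card_fun, Fintype.card_fin, hddef]
    calc ((Finset.image t univ).card : ℝ) ≤ (((n+1) ^ d : ℕ) : ℝ) := by exact_mod_cast h1
    _ = ((n:ℝ) + 1) ^ d := by push_cast; ring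
  have hTPc0 : 0 ≤ (T.card : ℝ) * P c := mul_nonneg (Nat.cast_nonneg _) hPc_pos.le
  have hfinal : (1:ℝ) ≤ ((n:ℝ) + 1) ^ d * ((T.card : ℝ) * P c) := by
    calc (1:ℝ) = ∑ k ∈ Finset.image t univ,
          ((univ.filter (fun x => t x = k)).card : ℝ) * P k := hcover
    _ ≤ ∑ _k ∈ Finset.image t univ, (T.card : ℝ) * P c := Finset.sum_le_sum hterm
    _ = ((Finset.image t univ).card : ℝ) * ((T.card : ℝ) * P c) := by
          rw [Finset.sum_const, nsmul_eq_mul]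
    _ ≤ ((n:ℝ) + 1) ^ d * ((T.card : ℝ) * P c) := mul_le_mul_of_nonneg_right himg hTPc0
  refine ⟨?_, hupper⟩
  rw [hH]
  have hdpos : (0:ℝ) < ((n:ℝ) + 1) ^ d := by positivity
  have heq : 1 / (((n:ℝ) + 1) ^ d) * (P c)⁻¹ = 1 / ((((n:ℝ) + 1) ^ d) * P c) := by
    rw [one_div, one_div, mul_inv]
  rw [heq, div_le_iff₀ (mul_pos hdpos hPc_pos)]
  calc (1:ℝ) ≤ ((n:ℝ) + 1) ^ d * ((T.card : ℝ) * P c) := hfinal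
  _ = (T.card : ℝ) * (((n:ℝ) + 1) ^ d * P c) := by ring
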